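/- Let (E,F) be a triangulation datum. Then |Adm(E,F,4)| ≤ ( Σ_{θ ∈ Adm(E,F,3), θ ≠ 0} 2^{ker_θ} ) + |Adm(E,F,3)|, where for θ ∈ Adm(E,F,3) we write ker_θ = #{e ∈ E : θ(e) = 0}, and 0 denotes the zero colouring. -/

import Mathlib

/-- A colouring `θ : E → ℚ` is admissible for the triangulation datum `(E, F)`
and the integer `r` if every edge colour lies in `{0, 1/2, 1, …, (r-2)/2}` and
every triple of `F` satisfies the parity condition, the triangle inequalities,
and the upper bound constraint. -/
def IsAdmissible {E : Type*} (F : Multiset (E × E × E)) (r : ℕ) (θ : E → ℚ) : Prop :=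
  (∀ e : E, ∃ k : ℕ, k ≤ r - 2 ∧ θ e = (k : ℚ) / 2) ∧
  ∀ t ∈ F,
    (∃ z : ℤ, θ t.1 + θ t.2.1 + θ t.2.2 = (z : ℚ)) ∧
    θ t.1 ≤ θ t.2.1 + θ t.2.2 ∧
    θ t.2.1 ≤ θ t.1 + θ t.2.2 ∧
    θ t.2.2 ≤ θ t.1 + θ t.2.1 ∧
    θ t.1 + θ t.2.1 + θ t.2.2 ≤ (r : ℚ) - 2

/-- The set of admissible colourings of `(E, F)` for the integer `r`. -/
def Adm {E : Type*} (F : Multiset (E × E × E)) (r : ℕ) : Set (E → ℚ) :=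
  {θ | IsAdmissible F r θ}



private lemma half_ne_int (z n : ℤ) : ((z : ℚ)) ≠ (n : ℚ) + 1/2 := by
  intro h
  have h2 : ((2*z : ℤ) : ℚ) = ((2*n+1 : ℤ) : ℚ) := by push_cast; linarith
  have := Int.cast_injective (α := ℚ) h2
  omega

private def phiv (x : ℚ) : ℚ := if x = 1/2 then 1/2 else 0

set_option linter.unreachableTactic false
set_option linter.unusedTactic false

private lemma helperA (a b c : ℚ) (ha : a = 0 ∨ a = 1/2 ∨ a = 1)
    (hb : b = 0 ∨ b = 1/2 ∨ b = 1) (hc : c = 0 ∨ c = 1/2 ∨ c = 1)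
    (hz : ∃ z : ℤ, a + b + c = (z : ℚ)) :
    (∃ z : ℤ, phiv a + phiv b + phiv c = (z : ℚ)) ∧ phiv a ≤ phiv b + phiv c ∧
      phiv b ≤ phiv a + phiv c ∧ phiv c ≤ phiv a + phiv b ∧
      phiv a + phiv b + phiv c ≤ ((3:ℕ):ℚ) - 2 := by
  obtain ⟨z, hz⟩ := hz
  rcases ha with rfl|rfl|rfl <;> rcases hb with rfl|rfl|rfl <;> rcases hc with rfl|rfl|rfl <;>
    simp only [phiv] <;> norm_num <;>
    first
      | (refine ⟨0, ?_⟩; norm_num; done)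
      | (refine ⟨1, ?_⟩; norm_num; done)
      | (refine ⟨⟨0, by norm_num⟩, ?_⟩; norm_num; done)
      | (refine ⟨⟨1, by norm_num⟩, ?_⟩; norm_num; done)
      | (exfalso;
          first
            | exact half_ne_int z 0 (by push_cast; linarith)
            | exact half_ne_int z 1 (by push_cast; linarith)
            | exact half_ne_int z 2 (by push_cast; linarith))

private lemma helperB (a b c : ℚ) (ha : a = 0 ∨ a = 1)
    (hb : b = 0 ∨ b = 1) (hc : c = 0 ∨ c = 1)
    (h1 : a ≤ b + c) (h2 : b ≤ a + c) (h3 : c ≤ a + b) (h4 : a + b + c ≤ ((4:ℕ):ℚ) - 2) :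
    (∃ z : ℤ, a/2 + b/2 + c/2 = (z : ℚ)) ∧ a/2 ≤ b/2 + c/2 ∧
      b/2 ≤ a/2 + c/2 ∧ c/2 ≤ a/2 + b/2 ∧ a/2 + b/2 + c/2 ≤ ((3:ℕ):ℚ) - 2 := by
  rcases ha with rfl|rfl <;> rcases hb with rfl|rfl <;> rcases hc with rfl|rfl <;>
    norm_num at h1 <;> norm_num at h2 <;> norm_num at h3 <;> norm_num at h4 <;> norm_num <;>
    first
      | (refine ⟨0, ?_⟩; norm_num; done)
      | (refine ⟨1, ?_⟩; norm_num; done)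
      | (refine ⟨⟨0, by norm_num⟩, ?_⟩; norm_num; done)
      | (refine ⟨⟨1, by norm_num⟩, ?_⟩; norm_num; done)

private lemma adm_finite {E : Type*} [Fintype E] (F : Multiset (E × E × E)) (r : ℕ) :
    (Adm F r).Finite := by
  have h : Adm F r ⊆ Set.pi Set.univ
      (fun _ : E => (fun k : ℕ => (k : ℚ) / 2) '' (Set.Iic (r - 2))) := by
    intro θ hθ e _
    obtain ⟨k, hk, he⟩ := hθ.1 e
    exact ⟨k, hk, he.symm⟩
  exact Set.Finite.subset (Set.Finite.pi fun _ => (Set.finite_Iic _).image _) h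

/-- `|Adm(E,F,4)| ≤ Σ_{θ ∈ Adm(E,F,3), θ ≠ 0} 2^{ker_θ} + |Adm(E,F,3)|`, where
`ker_θ` is the number of edges coloured `0` by `θ`. -/
theorem adm_four_card_le {E : Type*} [Fintype E] (F : Multiset (E × E × E)) :
    (Adm F 4).ncard ≤
      (∑ᶠ θ ∈ Adm F 3 \ {(0 : E → ℚ)}, 2 ^ ({e : E | θ e = 0}.ncard)) +
        (Adm F 3).ncard := by
  classical
  have hfin4 := adm_finite F 4
  have hfin3 := adm_finite F 3
  set A4 : Finset (E → ℚ) := hfin4.toFinset with hA4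
  set A3 : Finset (E → ℚ) := hfin3.toFinset with hA3
  set Φ : (E → ℚ) → (E → ℚ) := fun θ e => phiv (θ e) with hΦ
  -- values of admissible colourings for r = 4
  have hval4 : ∀ θ ∈ Adm F 4, ∀ e, θ e = 0 ∨ θ e = 1/2 ∨ θ e = 1 := by
    intro θ hθ e
    obtain ⟨k, hk, he⟩ := hθ.1 e
    interval_cases k <;> norm_num [he]
  -- Φ maps Adm 4 to Adm 3
  have hΦmem : ∀ θ ∈ Adm F 4, Φ θ ∈ Adm F 3 := by
    intro θ hθ
    constructor
    · intro e
      by_cases h : θ e = 1/2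
      · refine ⟨1, by norm_num, ?_⟩
        show phiv (θ e) = _
        unfold phiv; rw [if_pos h]; norm_num
      · refine ⟨0, by norm_num, ?_⟩
        show phiv (θ e) = _
        unfold phiv; rw [if_neg h]; norm_num
    · intro t ht
      exact helperA _ _ _ (hval4 θ hθ t.1) (hval4 θ hθ t.2.1) (hval4 θ hθ t.2.2)
        (hθ.2 t ht).1
  -- zero is admissible for r = 3
  have h0 : (0 : E → ℚ) ∈ Adm F 3 := by
    refine ⟨fun e => ⟨0, by norm_num⟩, fun t ht => ⟨⟨0, by norm_num⟩, by norm_num⟩⟩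
  have h0' : (0 : E → ℚ) ∈ A3 := hfin3.mem_toFinset.2 h0
  -- fiberwise counting
  have hcard : A4.card = ∑ η ∈ A3, (A4.filter (fun θ => Φ θ = η)).card := by
    refine Finset.card_eq_sum_card_fiberwise fun θ hθ => ?_
    exact hfin3.mem_toFinset.2 (hΦmem θ (hfin4.mem_toFinset.1 hθ))
  -- the fiber over zero injects into A3
  have hfib0 : (A4.filter (fun θ => Φ θ = 0)).card ≤ A3.card := by
    refine Finset.card_le_card_of_injOn (fun θ e => θ e / 2) ?_ ?_
    · intro θ hθ
      rw [Finset.mem_coe, Finset.mem_filter] at hθ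
      obtain ⟨hθ4, hθ0⟩ := hθ
      replace hθ4 : θ ∈ Adm F 4 := hfin4.mem_toFinset.1 hθ4
      have hv : ∀ e, θ e = 0 ∨ θ e = 1 := by
        intro e
        have h2 : θ e ≠ 1/2 := by
          intro h
          have := congrFun hθ0 e
          simp [hΦ, phiv, h] at this
        rcases hval4 θ hθ4 e with h | h | h
        · exact Or.inl h
        · exact absurd h h2
        · exact Or.inr h
      refine hfin3.mem_toFinset.2 ⟨fun e => ?_, fun t ht => ?_⟩
      · rcases hv e with h | h
        · exact ⟨0, by norm_num, by show θ e / 2 = _; rw [h]; norm_num⟩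
        · exact ⟨1, by norm_num, by show θ e / 2 = _; rw [h]; norm_num⟩
      · obtain ⟨_, h1, h2, h3, h4⟩ := hθ4.2 t ht
        exact helperB _ _ _ (hv t.1) (hv t.2.1) (hv t.2.2) h1 h2 h3 h4
    · intro θ1 _ θ2 _ h
      funext e
      have := congrFun h e
      simpa using (by linarith [congrFun h e] : θ1 e = θ2 e)
  -- each fiber is bounded by 2 ^ (number of zero edges)
  have hfib : ∀ η : E → ℚ, (A4.filter (fun θ => Φ θ = η)).card ≤
      2 ^ ({e : E | η e = 0}.ncard) := by
    intro η
    have hinj : Set.InjOn (fun (θ : E → ℚ) (e : {e : E | η e = 0}) => decide (θ e.1 = 1))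
        ((A4.filter (fun θ => Φ θ = η)) : Set (E → ℚ)) := by
      intro θ1 h1 θ2 h2 heq
      simp only [Finset.coe_filter, Set.mem_setOf_eq] at h1 h2
      obtain ⟨h14, h1η⟩ := h1
      obtain ⟨h24, h2η⟩ := h2
      replace h14 : θ1 ∈ Adm F 4 := hfin4.mem_toFinset.1 h14
      replace h24 : θ2 ∈ Adm F 4 := hfin4.mem_toFinset.1 h24
      funext e
      by_cases he : η e = 0
      · have k1 : θ1 e ≠ 1/2 := by
          intro h; have := congrFun h1η e; simp [hΦ, phiv, h, he] at this
        have k2 : θ2 e ≠ 1/2 := by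
          intro h; have := congrFun h2η e; simp [hΦ, phiv, h, he] at this
        have hd := congrFun heq ⟨e, he⟩
        simp only [decide_eq_decide] at hd
        rcases hval4 θ1 h14 e with m1 | m1 | m1 <;> rcases hval4 θ2 h24 e with m2 | m2 | m2 <;>
          simp_all <;> norm_num at *
      · have k1 : θ1 e = 1/2 := by
          by_contra h
          have h5 : phiv (θ1 e) = η e := congrFun h1η e
          unfold phiv at h5; rw [if_neg h] at h5
          exact he h5.symm
        have k2 : θ2 e = 1/2 := by
          by_contra h
          have h5 : phiv (θ2 e) = η e := congrFun h2η e
          unfold phiv at h5; rw [if_neg h] at h5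
          exact he h5.symm
        rw [k1, k2]
    calc (A4.filter (fun θ => Φ θ = η)).card
        = ((A4.filter (fun θ => Φ θ = η)) : Set (E → ℚ)).ncard := by
          rw [Set.ncard_coe_finset]
      _ ≤ (Set.univ : Set ({e : E | η e = 0} → Bool)).ncard := by
          exact Set.ncard_le_ncard_of_injOn _ (fun a _ => Set.mem_univ _) hinj
            Set.finite_univ
      _ = 2 ^ ({e : E | η e = 0}.ncard) := by
          rw [Set.ncard_univ, Nat.card_fun, Nat.card_coe_set_eq]
          norm_num [Nat.card_eq_fintype_card]
  -- put everything together
  have key : A4.card ≤ (∑ η ∈ A3.erase 0, 2 ^ ({e : E | η e = 0}.ncard)) + A3.card := by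
    rw [hcard, ← Finset.sum_erase_add _ _ h0']
    exact Nat.add_le_add (Finset.sum_le_sum fun η _ => hfib η) hfib0
  have hset : Adm F 3 \ {(0 : E → ℚ)} = ((A3.erase 0 : Finset (E → ℚ)) : Set (E → ℚ)) := by
    ext θ
    simp [hA3, hfin3.mem_toFinset, Set.mem_diff, And.comm]
  rw [show (Adm F 4).ncard = A4.card from Set.ncard_eq_toFinset_card _ hfin4,
    show (Adm F 3).ncard = A3.card from Set.ncard_eq_toFinset_card _ hfin3,
    hset, finsum_mem_coe_finset]
  exact key
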